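/- In the symmetric group Sₙ, a subset S of the positive roots {tᵢ - tⱼ : i < j} is the inversion set Inv(w) of some permutation w if and only if S is 'closed' and 'coclosed': (1) if α, β ∈ S and α + β is a positive root then α + β ∈ S, and (2) if α, β are positive roots not in S and α + β is a positive root then α + β ∉ S. -/

import Mathlib

/-- The inversion set of `w ∈ Sₙ`: positive roots `tᵢ - tⱼ` (pairs `(i,j)`, `i < j`)
with `w⁻¹(i) > w⁻¹(j)`. -/
private lemma monoEquivOfFin_lt_iff {α : Type*} [Fintype α] [LinearOrder α] {k : ℕ}
    (h : Fintype.card α = k) (i j : Fin k) :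
    i < j ↔ monoEquivOfFin α h i < monoEquivOfFin α h j :=
  (OrderIso.lt_iff_lt _).symm

def invSet (n : ℕ) (w : Equiv.Perm (Fin n)) : Set (Fin n × Fin n) :=
  {p | p.1 < p.2 ∧ w⁻¹ p.2 < w⁻¹ p.1}

/-- a subset `S` of the positive roots `{tᵢ - tⱼ : i < j}` of type `A_{n-1}`
is the inversion set of some permutation `w ∈ Sₙ` if and only if `S` is closed
(if `α, β ∈ S` and `α + β` is a root then `α + β ∈ S`) and coclosed (if `α, β ∉ S` are
positive roots and `α + β` is a root then `α + β ∉ S`), where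
`(tₐ - t_b) + (t_b - t_c) = tₐ - t_c`. -/
theorem inversion_set_iff_closed_coclosed (n : ℕ) (S : Set (Fin n × Fin n))
    (hS : ∀ p ∈ S, p.1 < p.2) :
    (∃ w : Equiv.Perm (Fin n), S = invSet n w) ↔
      ((∀ a b c : Fin n, a < b → b < c → (a, b) ∈ S → (b, c) ∈ S → (a, c) ∈ S) ∧
       (∀ a b c : Fin n, a < b → b < c → (a, b) ∉ S → (b, c) ∉ S → (a, c) ∉ S)) := by
  constructor
  · rintro ⟨w, rfl⟩
    constructor
    · rintro a b c hab hbc ⟨-, h1⟩ ⟨-, h2⟩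
      exact ⟨hab.trans hbc, h2.trans h1⟩
    · rintro a b c hab hbc h1 h2 ⟨-, h3⟩
      have hab' : ¬ (w⁻¹ b < w⁻¹ a) := fun h => h1 ⟨hab, h⟩
      have hbc' : ¬ (w⁻¹ c < w⁻¹ b) := fun h => h2 ⟨hbc, h⟩
      exact hab' ((not_lt.mp hbc').trans_lt h3)
  · rintro ⟨hcl, hco⟩
    classical
    set r : Fin n → Fin n → Prop := fun i j => (i < j ∧ (i, j) ∉ S) ∨ (j < i ∧ (j, i) ∈ S)
      with hr
    have rtrans : ∀ a b c, r a b → r b c → r a c := by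
      rintro a b c (⟨hab, hnab⟩ | ⟨hba, hba'⟩) (⟨hbc, hnbc⟩ | ⟨hcb, hcb'⟩)
      · exact Or.inl ⟨hab.trans hbc, hco a b c hab hbc hnab hnbc⟩
      · rcases lt_trichotomy a c with h | h | h
        · refine Or.inl ⟨h, fun hac => hnab (hcl a c b h hcb hac hcb')⟩
        · exact absurd (h ▸ hcb') hnab
        · refine Or.inr ⟨h, by_contra fun hnca => (hco c a b h hab hnca hnab) hcb'⟩
      · rcases lt_trichotomy a c with h | h | h
        · refine Or.inl ⟨h, fun hac => hnbc (hcl b a c hba h hba' hac)⟩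
        · exact absurd (h ▸ hba') hnbc
        · refine Or.inr ⟨h, by_contra fun hnca => (hco b c a hbc h hnbc hnca) hba'⟩
      · exact Or.inr ⟨hcb.trans hba, hcl c b a hcb hba hcb' hba'⟩
    have rirr : ∀ a, ¬ r a a := by
      rintro a (⟨h, -⟩ | ⟨h, -⟩) <;> exact lt_irrefl a h
    have rtot : ∀ a b, r a b ∨ a = b ∨ r b a := by
      intro a b
      rcases lt_trichotomy a b with h | h | h
      · by_cases hs : (a, b) ∈ S
        · exact Or.inr (Or.inr (Or.inr ⟨h, hs⟩))
        · exact Or.inl (Or.inl ⟨h, hs⟩)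
      · exact Or.inr (Or.inl h)
      · by_cases hs : (b, a) ∈ S
        · exact Or.inl (Or.inr ⟨h, hs⟩)
        · exact Or.inr (Or.inr (Or.inl ⟨h, hs⟩))
    haveI : IsStrictTotalOrder (Fin n) r :=
      { trichotomous := fun a b h1 h2 => ((rtot a b).resolve_left h1).resolve_right h2, irrefl := rirr, trans := rtrans }
    let L : LinearOrder (Fin n) := linearOrderOfSTO r
    let e := @monoEquivOfFin (Fin n) _ L n (Fintype.card_fin n)
    refine ⟨e.toEquiv, ?_⟩
    have hm : ∀ i j : Fin n, i < j ↔ r (e i) (e j) := fun i j =>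
      @monoEquivOfFin_lt_iff (Fin n) _ L n (Fintype.card_fin n) i j
    have key : ∀ i j : Fin n, e.toEquiv⁻¹ j < e.toEquiv⁻¹ i ↔ r j i := by
      intro i j
      rw [Equiv.Perm.inv_def, hm]
      rw [show e (e.toEquiv.symm j) = j from e.toEquiv.apply_symm_apply j,
        show e (e.toEquiv.symm i) = i from e.toEquiv.apply_symm_apply i]
    ext ⟨i, j⟩
    simp only [invSet, Set.mem_setOf_eq, key]
    constructor
    · intro h
      have hij := hS _ h
      exact ⟨hij, Or.inr ⟨hij, h⟩⟩
    · rintro ⟨hij, (⟨h, -⟩ | ⟨-, h⟩)⟩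
      · exact absurd hij (lt_asymm h)
      · exact h
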